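/- arXiv:1706.09069 — 3 statements merged into one kernel-verified Lean document; each statement's English description precedes it below -/
import Mathlib

section
/- Let a ∈ (0,1/2], b ∈ (0,1], h ≥ 0, and let ν be a Borel measure on [0,π] with ν ≤ (1/π)·Lebesgue measure, ν([0,π]) ≤ a, and ∫ (cosh(h) − sinh(h)·cos(φ))^{-1} dν(φ) ≥ b. Then e^h ≥ tan(πb/2)/tan(πa/2), i.e., h ≥ log(tan(πb/2)/tan(πa/2)). -/
open Real MeasureTheory

private lemma alg_aux (E S C : ℝ) (hE : 0 < E) (hC : 0 < C) :
    (E * S^2 + E⁻¹ * C^2)⁻¹ = 2 * (1 / (1 + (E * (S/C))^2) * (E * (1/C^2 * (1/2)))) := by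
  have hd : 0 < E * S^2 + E⁻¹ * C^2 := by positivity
  have h1 : (0:ℝ) < 1 + (E * (S/C))^2 := by positivity
  field_simp
  ring

set_option maxHeartbeats 2000000 in
theorem stmt_4 (a b h : ℝ) (ha : a ∈ Set.Ioc (0 : ℝ) (1 / 2))
    (hb : b ∈ Set.Ioc (0 : ℝ) 1) (hh : 0 ≤ h)
    (ν : Measure ℝ)
    (hν : ν ≤ (ENNReal.ofReal (1 / π)) • volume)
    (hsupp : ν (Set.Icc 0 π)ᶜ = 0)
    (hmass : ν (Set.Icc 0 π) ≤ ENNReal.ofReal a)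
    (hint : b ≤ ∫ φ, (Real.cosh h - Real.sinh h * Real.cos φ)⁻¹ ∂ν) :
    Real.exp h ≥ Real.tan (π * b / 2) / Real.tan (π * a / 2) ∧
    h ≥ Real.log (Real.tan (π * b / 2) / Real.tan (π * a / 2)) := by
  obtain ⟨ha0, ha2⟩ := ha
  obtain ⟨hb0, hb1⟩ := hb
  have hπ : (0:ℝ) < π := Real.pi_pos
  set P : ℝ → ℝ := fun φ => (Real.cosh h - Real.sinh h * Real.cos φ)⁻¹ with hPdef
  have hsh : 0 ≤ Real.sinh h := by positivity
  have hden : ∀ φ : ℝ, 0 < Real.cosh h - Real.sinh h * Real.cos φ := by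
    intro φ
    have h1 : Real.sinh h * Real.cos φ ≤ Real.sinh h := by
      nlinarith [Real.cos_le_one φ]
    have h2 : Real.cosh h - Real.sinh h = Real.exp (-h) := Real.cosh_sub_sinh h
    nlinarith [Real.exp_pos (-h)]
  have hPcont : Continuous P := by
    apply Continuous.inv₀ (by continuity)
    intro φ; exact (hden φ).ne'
  have hPpos : ∀ φ, 0 < P φ := fun φ => inv_pos.mpr (hden φ)
  have hPle : ∀ φ, P φ ≤ Real.exp h := by
    intro φ
    have h2 : Real.exp (-h) ≤ Real.cosh h - Real.sinh h * Real.cos φ := by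
      have := Real.cosh_sub_sinh h
      nlinarith [Real.cos_le_one φ]
    have := inv_anti₀ (Real.exp_pos (-h)) h2
    rwa [Real.exp_neg, inv_inv] at this
  -- finite measure
  have hνuniv : ν Set.univ ≤ ENNReal.ofReal a := by
    calc ν Set.univ = ν (Set.Icc 0 π ∪ (Set.Icc 0 π)ᶜ) := by rw [Set.union_compl_self]
    _ ≤ ν (Set.Icc 0 π) + ν (Set.Icc 0 π)ᶜ := measure_union_le _ _
    _ = ν (Set.Icc 0 π) := by rw [hsupp, add_zero]
    _ ≤ ENNReal.ofReal a := hmass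
  have hνfin : IsFiniteMeasure ν := ⟨lt_of_le_of_lt hνuniv ENNReal.ofReal_lt_top⟩
  set x0 : ℝ := π * a with hx0def
  have hx0pos : 0 < x0 := by positivity
  have hx0le2 : x0 ≤ π / 2 := by
    rw [hx0def]; nlinarith
  have hx0leπ : x0 ≤ π := by linarith
  set c : ℝ := P x0 with hcdef
  have hcpos : 0 < c := hPpos x0
  set g : ℝ → ℝ := fun φ => max (P φ - c) 0 with hgdef
  have hgcont : Continuous g := (hPcont.sub continuous_const).max continuous_const
  have hgnonneg : ∀ φ, 0 ≤ g φ := fun φ => le_max_right _ _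
  have hgle : ∀ φ, g φ ≤ Real.exp h := by
    intro φ
    apply max_le _ (Real.exp_pos h).le
    have := hPle φ; linarith
  -- monotonicity of P
  have hPanti : ∀ x y : ℝ, 0 ≤ x → y ≤ π → x ≤ y → P y ≤ P x := by
    intro x y hx hy hxy
    have hcos : Real.cos y ≤ Real.cos x := Real.cos_le_cos_of_nonneg_of_le_pi hx hy hxy
    have : Real.cosh h - Real.sinh h * Real.cos x ≤ Real.cosh h - Real.sinh h * Real.cos y := by
      nlinarith
    exact inv_anti₀ (hden x) this
  -- Step A : hint ≤ ∫ g dν + c * mass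
  have hPintν : Integrable P ν := by
    apply Integrable.mono' (integrable_const (Real.exp h)) hPcont.aestronglyMeasurable
    filter_upwards with φ
    rw [Real.norm_eq_abs, abs_of_pos (hPpos φ)]
    exact hPle φ
  have hgintν : Integrable g ν := by
    apply Integrable.mono' (integrable_const (Real.exp h)) hgcont.aestronglyMeasurable
    filter_upwards with φ
    rw [Real.norm_eq_abs, abs_of_nonneg (hgnonneg φ)]
    exact hgle φ
  have stepA : ∫ φ, P φ ∂ν ≤ ∫ φ, g φ ∂ν + (ν Set.univ).toReal * c := by
    have h1 : ∫ φ, P φ ∂ν ≤ ∫ φ, (g φ + c) ∂ν := by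
      apply integral_mono hPintν (hgintν.add (integrable_const c))
      intro φ
      have h2 : P φ - c ≤ g φ := le_max_left _ _
      show P φ ≤ g φ + c
      linarith
    rwa [integral_add hgintν (integrable_const c), integral_const, smul_eq_mul] at h1
  -- Step B : ∫ g dν ≤ (1/π) ∫_{Icc 0 π} g
  have hrestr : ν.restrict (Set.Icc 0 π) = ν := by
    apply Measure.restrict_eq_self_of_ae_mem
    rw [ae_iff]
    exact hsupp
  have hmono : ν ≤ ((ENNReal.ofReal (1/π)) • volume).restrict (Set.Icc 0 π) := by
    conv_lhs => rw [← hrestr]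
    exact Measure.restrict_mono (subset_refl _) hν
  have hgIntOn : IntegrableOn g (Set.Icc 0 π) volume :=
    hgcont.continuousOn.integrableOn_compact isCompact_Icc
  have stepB : ∫ φ, g φ ∂ν ≤ (1/π) * ∫ φ in Set.Icc 0 π, g φ := by
    have h1 : ∫ φ, g φ ∂ν ≤ ∫ φ, g φ ∂(((ENNReal.ofReal (1/π)) • volume).restrict (Set.Icc 0 π)) := by
      apply integral_mono_measure hmono
      · filter_upwards with φ using hgnonneg φ
      · rw [Measure.restrict_smul]
        exact hgIntOn.smul_measure ENNReal.ofReal_ne_top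
    rwa [Measure.restrict_smul, integral_smul_measure, ENNReal.toReal_ofReal (by positivity),
      smul_eq_mul] at h1
  -- Step C : compute ∫_{Icc 0 π} g
  have hsplitset : Set.Icc (0:ℝ) x0 ∪ Set.Ioc x0 π = Set.Icc 0 π :=
    Set.Icc_union_Ioc_eq_Icc hx0pos.le hx0leπ
  have hIoczero : ∫ φ in Set.Ioc x0 π, g φ = 0 := by
    rw [setIntegral_congr_fun measurableSet_Ioc (g := fun _ => (0:ℝ))]
    · simp
    · intro φ hφ
      have : P φ ≤ c := hPanti x0 φ hx0pos.le hφ.2 hφ.1.le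
      simp only [hgdef]
      rw [max_eq_right]; linarith
  have hIcceq : ∫ φ in Set.Icc 0 x0, g φ = (∫ φ in Set.Icc 0 x0, P φ) - c * x0 := by
    rw [setIntegral_congr_fun measurableSet_Icc (g := fun φ => P φ - c)]
    · rw [integral_sub (hPcont.continuousOn.integrableOn_compact isCompact_Icc)
        ((integrableOn_const_iff (C := c)).mpr (Or.inr (by rw [Real.volume_Icc]; exact ENNReal.ofReal_lt_top)))]
      rw [setIntegral_const, Real.volume_real_Icc_of_le hx0pos.le, smul_eq_mul]
      ring
    · intro φ hφ
      have : c ≤ P φ := hPanti φ x0 hφ.1 hx0leπ hφ.2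
      simp only [hgdef]
      rw [max_eq_left]; linarith
  have hCsplit : ∫ φ in Set.Icc 0 π, g φ = (∫ φ in Set.Icc 0 x0, P φ) - c * x0 := by
    rw [← hsplitset, setIntegral_union (Set.disjoint_left.mpr (fun x hx hx2 => absurd hx.2 (not_le.mpr hx2.1))) measurableSet_Ioc
      (hgIntOn.mono_set (by rw [← hsplitset]; exact Set.subset_union_left))
      (hgIntOn.mono_set (by rw [← hsplitset]; exact Set.subset_union_right)),
      hIoczero, hIcceq, add_zero]
  -- Step D : FTC
  have hFTC : ∫ φ in Set.Icc 0 x0, P φ = 2 * Real.arctan (Real.exp h * Real.tan (x0/2)) := by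
    rw [integral_Icc_eq_integral_Ioc, ← intervalIntegral.integral_of_le hx0pos.le]
    have key : ∫ x in (0:ℝ)..x0, P x =
        (fun x => 2 * Real.arctan (Real.exp h * Real.tan (x/2))) x0 -
        (fun x => 2 * Real.arctan (Real.exp h * Real.tan (x/2))) 0 := by
      apply intervalIntegral.integral_eq_sub_of_hasDerivAt
        (f := fun x => 2 * Real.arctan (Real.exp h * Real.tan (x/2))) (f' := P)
      · intro x hx
        rw [Set.uIcc_of_le hx0pos.le] at hx
        obtain ⟨hx1, hx2⟩ := hx
        have hcospos : 0 < Real.cos (x/2) := by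
          apply Real.cos_pos_of_mem_Ioo
          constructor <;> [linarith; linarith]
        have hC : Real.cos (x/2) ≠ 0 := hcospos.ne'
        have h1 : HasDerivAt (fun y : ℝ => Real.tan (y/2)) (1 / Real.cos (x/2)^2 * (1/2)) x := by
          have := (Real.hasDerivAt_tan hC).comp x ((hasDerivAt_id x).div_const 2)
          simpa [Function.comp_def] using this
        have h2 := h1.const_mul (Real.exp h)
        have h3 := (Real.hasDerivAt_arctan (Real.exp h * Real.tan (x/2))).comp x h2
        have h4 := h3.const_mul (2:ℝ)
        refine h4.congr_deriv (Eq.symm ?_)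
        -- algebraic identity
        have hcos : Real.cos x = 2 * Real.cos (x/2)^2 - 1 := by
          have := Real.cos_sq (x/2)
          rw [show 2*(x/2) = x by ring] at this
          linarith
        have hS : Real.sin (x/2)^2 = 1 - Real.cos (x/2)^2 := by
          nlinarith [Real.sin_sq_add_cos_sq (x/2)]
        have hEE : Real.exp (-h) * Real.exp h = 1 := by
          rw [← Real.exp_add]; simp
        have hE := Real.exp_pos h
        have hden' := hden x
        show (Real.cosh h - Real.sinh h * Real.cos x)⁻¹ = _
        have hdd : Real.cosh h - Real.sinh h * Real.cos x =
            Real.exp h * Real.sin (x/2)^2 + Real.exp (-h) * Real.cos (x/2)^2 := by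
          rw [Real.cosh_eq, Real.sinh_eq, hcos, hS]; ring
        rw [hdd, Real.tan_eq_sin_div_cos, Real.exp_neg]
        exact alg_aux _ _ _ (Real.exp_pos h) hcospos
      · exact hPcont.intervalIntegrable _ _
    rw [key]
    norm_num
  -- Step E : combine
  have hmassR : (ν Set.univ).toReal ≤ a := ENNReal.toReal_le_of_le_ofReal ha0.le hνuniv
  set X : ℝ := Real.exp h * Real.tan (x0/2) with hXdef
  have key1 : b ≤ 1/π * (2 * Real.arctan X - c * x0) + (ν Set.univ).toReal * c := by
    calc b ≤ ∫ φ, P φ ∂ν := hint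
    _ ≤ ∫ φ, g φ ∂ν + (ν Set.univ).toReal * c := stepA
    _ ≤ (1/π * ∫ φ in Set.Icc 0 π, g φ) + (ν Set.univ).toReal * c := add_le_add_left stepB _
    _ = 1/π * (2 * Real.arctan X - c * x0) + (ν Set.univ).toReal * c := by
        rw [hCsplit, hFTC]
  have key3 : π * b / 2 ≤ Real.arctan X := by
    have e1 : π * (1/π * (2 * Real.arctan X - c * x0)) = 2 * Real.arctan X - c * x0 := by
      field_simp
    have e2 : π * ((ν Set.univ).toReal * c) ≤ π * (a * c) :=
      mul_le_mul_of_nonneg_left (mul_le_mul_of_nonneg_right hmassR hcpos.le) hπ.le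
    have e3 : c * x0 = π * (a * c) := by rw [hx0def]; ring
    have e4 := mul_le_mul_of_nonneg_left key1 hπ.le
    rw [mul_add, e1] at e4
    linarith
  -- Conclusion
  rcases eq_or_lt_of_le hb1 with hbeq | hblt
  · have e0 : Real.tan (π * b / 2) = 0 := by rw [hbeq, mul_one, Real.tan_pi_div_two]
    rw [e0, zero_div]
    exact ⟨(Real.exp_pos h).le, by rw [Real.log_zero]; exact hh⟩
  · have hb2 : π * b / 2 < π / 2 := by
      have := mul_lt_mul_of_pos_left hblt hπ; linarith
    have hb2' : 0 < π * b / 2 := by positivity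
    have htb : Real.tan (π * b / 2) ≤ X := by
      have harc : Real.arctan X ∈ Set.Ioo (-(π/2)) (π/2) :=
        ⟨Real.neg_pi_div_two_lt_arctan X, Real.arctan_lt_pi_div_two X⟩
      have hmem : π * b / 2 ∈ Set.Ioo (-(π/2)) (π/2) := ⟨by linarith, hb2⟩
      have := Real.strictMonoOn_tan.monotoneOn hmem harc key3
      rwa [Real.tan_arctan] at this
    have hta : 0 < Real.tan (π * a / 2) :=
      Real.tan_pos_of_pos_of_lt_pi_div_two (by positivity)
        (by have := mul_le_mul_of_nonneg_left ha2 hπ.le; linarith)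
    have hx02 : x0 / 2 = π * a / 2 := by rw [hx0def]
    rw [hXdef, hx02] at htb
    have hratio : Real.tan (π * b / 2) / Real.tan (π * a / 2) ≤ Real.exp h := by
      rw [div_le_iff₀ hta]
      linarith
    refine ⟨hratio, ?_⟩
    have htbpos : 0 < Real.tan (π * b / 2) :=
      Real.tan_pos_of_pos_of_lt_pi_div_two hb2' hb2
    have hlog : Real.log (Real.tan (π * b / 2) / Real.tan (π * a / 2)) ≤
        Real.log (Real.exp h) := Real.log_le_log (by positivity) hratio
    rwa [Real.log_exp] at hlog
end

section
/- For every integer k ≥ 2, k·arccos(1 − 1/k) > π/2. -/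
open Real

theorem stmt_9 (k : ℕ) (hk : 2 ≤ k) :
    π / 2 < (k : ℝ) * Real.arccos (1 - 1 / k) := by
  have hk0 : (0:ℝ) < k := by positivity
  have hkR : (2:ℝ) ≤ k := by exact_mod_cast hk
  set t : ℝ := π / (2 * k) with ht
  have htpos : 0 < t := by positivity
  have ht2 : t ^ 2 / 2 < 1 / k := by
    rw [ht, div_pow, div_div, div_lt_div_iff₀ (by positivity) hk0]
    have hpi : π < 3.15 := pi_lt_d2
    have : π ^ 2 < 16 := by nlinarith [pi_pos]
    nlinarith
  have hcos : 1 - 1 / (k:ℝ) < Real.cos t := by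
    have := Real.one_sub_sq_div_two_lt_cos (x := t) (ne_of_gt htpos)
    linarith
  have hmem : 1 - 1 / (k:ℝ) ∈ Set.Icc (-1:ℝ) 1 := by
    constructor
    · have : 1 / (k:ℝ) ≤ 1 := by
        rw [div_le_one hk0]; linarith
      linarith
    · have : 0 < 1 / (k:ℝ) := by positivity
      linarith
  have hlt : t < Real.arccos (1 - 1 / k) := by
    by_contra h
    push_neg at h
    have h1 : Real.cos t ≤ Real.cos (Real.arccos (1 - 1 / k)) := by
      rcases eq_or_lt_of_le h with h' | h'
      · rw [h']
      · exact le_of_lt (Real.strictAntiOn_cos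
          ⟨Real.arccos_nonneg _, Real.arccos_le_pi _⟩
          ⟨le_of_lt htpos, by
            rw [ht]
            calc π / (2 * k) ≤ π / 1 := by
                  apply div_le_div_of_nonneg_left pi_pos.le one_pos
                  linarith
              _ = π := by ring⟩ h')
    rw [Real.cos_arccos hmem.1 hmem.2] at h1
    linarith
  have : (k:ℝ) * t = π / 2 := by field_simp [ht]; rw [ht]; field_simp
  calc π / 2 = (k:ℝ) * t := this.symm
    _ < (k:ℝ) * Real.arccos (1 - 1/k) := by
        exact mul_lt_mul_of_pos_left hlt hk0
end

section
/- For the Fuchsian group Γ(2) generated by A = [[1,2],[0,1]] and B = [[1,0],[2,1]] acting on the upper half-plane, and the point z = i, the displacements satisfy d(i, A·i) = d(i, B·i) = log(3 + 2√2), and arccos(tanh(d(i,A·i)/2)) + arccos(tanh(d(i,B·i)/2)) = π/2. -/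
open Real Complex UpperHalfPlane Matrix

lemma aux_arsinh : Real.arsinh 1 = Real.log (1 + Real.sqrt 2) := by
  rw [Real.arsinh]; norm_num

lemma aux_log : Real.log (3 + 2 * Real.sqrt 2) = 2 * Real.arsinh 1 := by
  rw [aux_arsinh]
  rw [show (3 + 2 * Real.sqrt 2) = (1 + Real.sqrt 2)^2 by
    have h2 : Real.sqrt 2 ^ 2 = 2 := Real.sq_sqrt (by norm_num)
    nlinarith [h2]]
  rw [Real.log_pow]
  push_cast; ring

lemma aux_tanh : Real.tanh (Real.arsinh 1) = Real.sqrt 2 / 2 := by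
  rw [Real.tanh_eq_sinh_div_cosh, Real.sinh_arsinh, Real.cosh_arsinh]
  rw [show (1:ℝ) + 1^2 = 2 by norm_num]
  rw [div_eq_div_iff (by positivity) (by norm_num), one_mul, Real.mul_self_sqrt (by norm_num)]

lemma aux_arccos : Real.arccos (Real.sqrt 2 / 2) = π / 4 := by
  rw [← Real.cos_pi_div_four, Real.arccos_cos (by positivity) (by linarith [Real.pi_pos])]

theorem stmt_15 :
    let A : Matrix.SpecialLinearGroup (Fin 2) ℤ := ⟨!![1, 2; 0, 1], by decide⟩
    let B : Matrix.SpecialLinearGroup (Fin 2) ℤ := ⟨!![1, 0; 2, 1], by decide⟩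
    let z : UpperHalfPlane := ⟨Complex.I, by simp⟩
    dist z (A • z) = Real.log (3 + 2 * Real.sqrt 2) ∧
    dist z (B • z) = Real.log (3 + 2 * Real.sqrt 2) ∧
    Real.arccos (Real.tanh (dist z (A • z) / 2)) +
      Real.arccos (Real.tanh (dist z (B • z) / 2)) = π / 2 := by
  intro A B z
  have hA : ((A • z : ℍ) : ℂ) = Complex.I + 2 := by
    rw [UpperHalfPlane.coe_specialLinearGroup_apply]
    simp [A, z]
  have hB : ((B • z : ℍ) : ℂ) = 2/5 + (1/5) * Complex.I := by
    rw [UpperHalfPlane.coe_specialLinearGroup_apply]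
    simp [B, z]
    rw [div_eq_iff (by simp [Complex.ext_iff])]
    ring_nf
    simp [Complex.ext_iff]
  have hzc : (z : ℂ) = Complex.I := rfl
  have hzim : z.im = 1 := by simp [UpperHalfPlane.im, z, UpperHalfPlane.coe]
  have hAim : (A • z).im = 1 := by
    rw [← UpperHalfPlane.coe_im, hA]; simp
  have hBim : (B • z).im = 1/5 := by
    rw [← UpperHalfPlane.coe_im, hB]; simp
  have hdA : dist z (A • z) = 2 * Real.arsinh 1 := by
    rw [UpperHalfPlane.dist_eq, hzim, hAim]
    rw [Complex.dist_eq, hzc, hA]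
    norm_num
  have hdB : dist z (B • z) = 2 * Real.arsinh 1 := by
    rw [UpperHalfPlane.dist_eq, hzim, hBim]
    rw [Complex.dist_eq, hzc, hB]
    have habs : ‖(Complex.I - (2/5 + (1/5) * Complex.I))‖ = Real.sqrt (4/5) := by
      rw [Complex.norm_def, Complex.normSq_apply]
      norm_num
    rw [habs]
    have h1 : Real.sqrt ((1:ℝ) * (1/5)) = Real.sqrt (1/5) := by norm_num
    have h2 : Real.sqrt ((4:ℝ)/5) = 2 * Real.sqrt (1/5) := by
      rw [show (4:ℝ)/5 = 2^2 * (1/5) by norm_num, Real.sqrt_mul (by positivity), Real.sqrt_sq (by norm_num)]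
    rw [h1, h2, div_self (by positivity : (2 * Real.sqrt (1/5)) ≠ 0)]
  refine ⟨by rw [hdA, aux_log], by rw [hdB, aux_log], ?_⟩
  rw [hdA, hdB]
  rw [show (2 * Real.arsinh 1) / 2 = Real.arsinh 1 by ring, aux_tanh, aux_arccos]
  ring
end
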